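/- Let A_1, …, A_M be real n×n matrices with A := A_1 Hurwitz, set D_j := A_j − A_1 for j = 1,…,M, and let B_1, …, B_M be real n×m matrices. Define P_1 as the unique symmetric positive semidefinite solution of A·P_1 + P_1·Aᵀ + ∑_{j=1}^{M} B_j·B_jᵀ = 0 and, for k ≥ 2, P_k as the unique symmetric positive semidefinite solution of A·P_k + P_k·Aᵀ + ∑_{j=1}^{M} D_j·P_{k−1}·D_jᵀ = 0. If the series ∑_{k≥1} P_k is summable with sum P, then the range of P equals the span of all columns of matrices of the form M_s ⋯ M_1 · B_{i_0}, where s ≥ 0, each M_t belongs to {D_1, …, D_M, A}, i_0 ∈ {1,…,M}, and the empty product is the identity matrix. -/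

import Mathlib

open Matrix

/-- A real square matrix is Hurwitz if every eigenvalue of it, viewed as a complex
matrix, has strictly negative real part. -/
def IsHurwitz {n : ℕ} (A : Matrix (Fin n) (Fin n) ℝ) : Prop :=
  ∀ μ ∈ spectrum ℂ (A.map (algebraMap ℝ ℂ)), μ.re < 0

namespace RGEAux

open Polynomial

variable {n : ℕ}


variable {n : ℕ}

lemma dotmv {m : ℕ} (A : Matrix (Fin n) (Fin m) ℝ) (u : Fin m → ℝ) (v : Fin n → ℝ) :
    (A *ᵥ u) ⬝ᵥ v = u ⬝ᵥ (Aᵀ *ᵥ v) := by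
  rw [dotProduct_comm, dotProduct_mulVec, ← mulVec_transpose, dotProduct_comm]

lemma psd_symm {P : Matrix (Fin n) (Fin n) ℝ} (hP : P.PosSemidef) : Pᵀ = P := by
  rw [← conjTranspose_eq_transpose_of_trivial]; exact hP.1

lemma psd_dot_zero {P : Matrix (Fin n) (Fin n) ℝ} (hP : P.PosSemidef) {x : Fin n → ℝ}
    (h : x ⬝ᵥ (P *ᵥ x) = 0) : P *ᵥ x = 0 :=
  (hP.dotProduct_mulVec_zero_iff x).mp (by simpa using h)

lemma mem_range_of_dot_ker {R : Matrix (Fin n) (Fin n) ℝ} (hR : Rᵀ = R) {v : Fin n → ℝ}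
    (hv : ∀ w, R *ᵥ w = 0 → w ⬝ᵥ v = 0) : v ∈ LinearMap.range R.mulVecLin := by
  have hdisj : Disjoint (LinearMap.range R.mulVecLin) (LinearMap.ker R.mulVecLin) := by
    rw [Submodule.disjoint_def]
    rintro x ⟨u, rfl⟩ hx
    rw [LinearMap.mem_ker, mulVecLin_apply] at hx
    rw [mulVecLin_apply] at *
    have h0 : (R *ᵥ u) ⬝ᵥ (R *ᵥ u) = 0 := by
      rw [dotmv, hR, hx, dotProduct_zero]
    exact dotProduct_self_eq_zero.mp h0
  have htop : LinearMap.range R.mulVecLin ⊔ LinearMap.ker R.mulVecLin = ⊤ :=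
    Submodule.eq_top_of_disjoint _ _
      (LinearMap.finrank_range_add_finrank_ker R.mulVecLin).ge hdisj
  have hv' : v ∈ LinearMap.range R.mulVecLin ⊔ LinearMap.ker R.mulVecLin := by
    rw [htop]; trivial
  obtain ⟨y, hy, z, hz, rfl⟩ := Submodule.mem_sup.mp hv'
  obtain ⟨u, rfl⟩ := hy
  rw [LinearMap.mem_ker, mulVecLin_apply] at hz
  rw [mulVecLin_apply] at *
  have hz0 : z = 0 := by
    have h1 : z ⬝ᵥ (R *ᵥ u + z) = 0 := hv z hz
    have h2 : z ⬝ᵥ (R *ᵥ u) = 0 := by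
      rw [dotProduct_comm, dotmv, hR, hz, dotProduct_zero]
    rw [dotProduct_add, h2, zero_add] at h1
    exact dotProduct_self_eq_zero.mp h1
  rw [hz0, add_zero]
  exact ⟨u, rfl⟩



variable {n : ℕ}

lemma aeval_transpose (A : Matrix (Fin n) (Fin n) ℝ) (p : ℝ[X]) :
    aeval Aᵀ p = (aeval A p)ᵀ := by
  induction p using Polynomial.induction_on' with
  | add p q hp hq => simp [hp, hq]
  | monomial k c =>
      simp [aeval_monomial, Algebra.algebraMap_eq_smul_one, smul_mul_assoc,
        transpose_smul, transpose_mul, transpose_pow]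

noncomputable def shift : Module.End ℝ (ℕ → ℝ) where
  toFun s := fun k => s (k + 1)
  map_add' _ _ := rfl
  map_smul' _ _ := rfl

lemma shift_pow (k : ℕ) (s : ℕ → ℝ) (j : ℕ) : ((shift ^ k) s) j = s (j + k) := by
  induction k generalizing s j with
  | zero => simp
  | succ k ih =>
      rw [pow_succ, Module.End.mul_apply, ih]
      rfl

lemma neg_one_pow_end (k : ℕ) (s : ℕ → ℝ) :
    (((-1 : Module.End ℝ (ℕ → ℝ)) ^ k) s) = ((-1 : ℝ) ^ k) • s := by
  induction k with
  | zero => simp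
  | succ k ih =>
      have hneg : ∀ x : ℕ → ℝ, (-1 : Module.End ℝ (ℕ → ℝ)) x = -x := fun x => by simp
      rw [pow_succ', Module.End.mul_apply, ih, hneg]
      ext j
      simp [pow_succ]

lemma seq_zero {q r : ℝ[X]} (hco : IsCoprime q r) {s : ℕ → ℝ}
    (hq : aeval shift q s = 0) (hr : aeval shift r s = 0) : s = 0 := by
  obtain ⟨u, v, huv⟩ := hco
  have h1 : aeval shift (u * q + v * r) s = s := by
    rw [huv]; simp
  rw [map_add, _root_.map_mul, _root_.map_mul, LinearMap.add_apply, Module.End.mul_apply,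
    Module.End.mul_apply, hq, hr, map_zero, map_zero, add_zero] at h1
  exact h1.symm


lemma aeval_shift_seq (N P : Matrix (Fin n) (Fin n) ℝ) (w : Fin n → ℝ) (p : ℝ[X]) (j : ℕ) :
    (aeval shift p (fun k => w ⬝ᵥ (P *ᵥ (N ^ k *ᵥ w)))) j
      = w ⬝ᵥ (P *ᵥ ((aeval N p * N ^ j) *ᵥ w)) := by
  induction p using Polynomial.induction_on' with
  | add p q hp hq =>
      rw [map_add, map_add, LinearMap.add_apply, add_mul, add_mulVec, mulVec_add,
        dotProduct_add]
      simp only [Pi.add_apply, hp, hq]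
  | monomial k c =>
      rw [aeval_monomial, aeval_monomial, Algebra.algebraMap_eq_smul_one,
        Algebra.algebraMap_eq_smul_one]
      have hL : ((c • (1 : Module.End ℝ (ℕ → ℝ))) * shift ^ k) = c • shift ^ k := by
        simp [smul_mul_assoc]
      rw [hL]
      have hR : ((c • (1 : Matrix (Fin n) (Fin n) ℝ)) * N ^ k) * N ^ j
          = c • N ^ (j + k) := by
        rw [smul_mul_assoc, smul_mul_assoc, one_mul, ← pow_add, add_comm]
      rw [hR]
      show c * ((shift ^ k) _ j) = w ⬝ᵥ (P *ᵥ ((c • N ^ (j + k)) *ᵥ w))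
      rw [shift_pow, smul_mulVec, mulVec_smul, dotProduct_smul]
      simp

lemma aeval_neg_shift_seq (N P : Matrix (Fin n) (Fin n) ℝ) (w : Fin n → ℝ)
    (hg : ∀ i j : ℕ, (N ^ i *ᵥ w) ⬝ᵥ (P *ᵥ (N ^ j *ᵥ w))
        = (-1 : ℝ) ^ i * (w ⬝ᵥ (P *ᵥ (N ^ (i + j) *ᵥ w))))
    (p : ℝ[X]) (j : ℕ) :
    (aeval (-shift) p (fun k => w ⬝ᵥ (P *ᵥ (N ^ k *ᵥ w)))) j
      = ((aeval N p) *ᵥ w) ⬝ᵥ (P *ᵥ (N ^ j *ᵥ w)) := by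
  induction p using Polynomial.induction_on' with
  | add p q hp hq =>
      rw [map_add, map_add, LinearMap.add_apply, add_mulVec, add_dotProduct]
      simp only [Pi.add_apply, hp, hq]
  | monomial k c =>
      rw [aeval_monomial, aeval_monomial, Algebra.algebraMap_eq_smul_one,
        Algebra.algebraMap_eq_smul_one, smul_mul_assoc, smul_mul_assoc, one_mul, one_mul]
      have h1 : ∀ (s : ℕ → ℝ), (((-shift) ^ k) s) = ((-1:ℝ)^k) • ((shift ^ k) s) := by
        induction k with
        | zero => intro s; simp
        | succ k ih =>
            intro s
            have e : ((-shift) ^ (k+1)) s = -(((-shift)^k) (shift s)) := by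
              rw [pow_succ, Module.End.mul_apply, LinearMap.neg_apply, map_neg]
            rw [e, ih]
            ext j
            simp only [Pi.neg_apply, Pi.smul_apply, shift_pow, smul_eq_mul]
            have e2 : (shift s) (j+k) = s (j + (k+1)) := rfl
            rw [e2, pow_succ]
            ring
      show (c • (((-shift) ^ k) (fun t => w ⬝ᵥ (P *ᵥ (N ^ t *ᵥ w))))) j
        = ((c • N ^ k) *ᵥ w) ⬝ᵥ (P *ᵥ (N ^ j *ᵥ w))
      rw [h1, smul_mulVec, smul_dotProduct]
      simp only [Pi.smul_apply, shift_pow, smul_eq_mul]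
      rw [hg k j, add_comm k j]


variable {n : ℕ}

lemma charpoly_transpose (A : Matrix (Fin n) (Fin n) ℝ) : Aᵀ.charpoly = A.charpoly := by
  rw [Matrix.charpoly, Matrix.charpoly]
  have h : charmatrix Aᵀ = (charmatrix A)ᵀ := by
    refine Matrix.ext fun i j => ?_
    by_cases hij : i = j
    · subst hij
      simp [charmatrix_apply_eq, Matrix.transpose_apply]
    · simp [Matrix.transpose_apply, charmatrix_apply_ne _ _ _ hij,
        charmatrix_apply_ne _ _ _ (Ne.symm hij)]
  rw [h, Matrix.det_transpose]

lemma root_mem_spectrum (A : Matrix (Fin n) (Fin n) ℝ) (μ : ℂ)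
    (h : aeval μ A.charpoly = 0) : μ ∈ spectrum ℂ (A.map (algebraMap ℝ ℂ)) := by
  rw [spectrum.mem_iff]
  set Mc := A.map (algebraMap ℝ ℂ) with hMc
  have hev : (Mc.charpoly).eval μ = ((algebraMap ℂ (Matrix (Fin n) (Fin n) ℂ)) μ - Mc).det := by
    rw [Matrix.charpoly, eval_det, matPolyEquiv_charmatrix]
    simp [Matrix.algebraMap_eq_diagonal, Matrix.scalar_apply]
    rfl
  have hch : (Mc.charpoly).eval μ = 0 := by
    rw [hMc, Matrix.charpoly_map, eval_map, ← aeval_def, h]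
  intro hUnit
  rw [Matrix.isUnit_iff_isUnit_det] at hUnit
  rw [hev] at hch
  rw [hch] at hUnit
  exact (by simpa using hUnit : False)

lemma hurwitz_coprime {A : Matrix (Fin n) (Fin n) ℝ}
    (hA : ∀ μ ∈ spectrum ℂ (A.map (algebraMap ℝ ℂ)), μ.re < 0) :
    IsCoprime A.charpoly (A.charpoly.comp (-X)) := by
  refine (Polynomial.isCoprime_iff_aeval_ne_zero_of_isAlgClosed (k := ℝ) ℂ A.charpoly
    (A.charpoly.comp (-X))).mpr fun a => ?_
  by_contra hcon
  push_neg at hcon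
  obtain ⟨h1, h2⟩ := hcon
  have hr1 : a.re < 0 := hA a (root_mem_spectrum A a h1)
  have h2' : aeval (-a) A.charpoly = 0 := by
    rw [← h2, aeval_comp]
    simp
  have hr2 : (-a).re < 0 := hA (-a) (root_mem_spectrum A (-a) h2')
  rw [Complex.neg_re] at hr2
  linarith

lemma pow_mulVec_zero (N Q : Matrix (Fin n) (Fin n) ℝ) (w : Fin n → ℝ)
    (h : ∀ k < n, Q *ᵥ (N ^ k *ᵥ w) = 0) : ∀ k, Q *ᵥ (N ^ k *ᵥ w) = 0 := by
  rcases Nat.eq_zero_or_pos n with hn | hn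
  · subst hn
    haveI : Subsingleton (Fin 0 → ℝ) := ⟨fun a b => funext fun x => x.elim0⟩
    intro k; exact Subsingleton.elim _ _
  intro k
  induction k using Nat.strong_induction_on with
  | _ k ih =>
    rcases lt_or_ge k n with hk | hk
    · exact h k hk
    · have hch : aeval N N.charpoly = 0 := Matrix.aeval_self_charpoly N
      have hdeg : N.charpoly.natDegree = n := by
        rw [Matrix.charpoly_natDegree_eq_dim, Fintype.card_fin]
      have hsum : (0 : Matrix (Fin n) (Fin n) ℝ)
          = ∑ i ∈ Finset.range (n + 1), N.charpoly.coeff i • N ^ i := by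
        rw [← hch, Polynomial.aeval_eq_sum_range, hdeg]
      have hlead : N.charpoly.coeff n = 1 := by
        have := (Matrix.charpoly_monic N).coeff_natDegree
        rwa [hdeg] at this
      have hNn : N ^ n = -∑ i ∈ Finset.range n, N.charpoly.coeff i • N ^ i := by
        rw [Finset.sum_range_succ, hlead, one_smul] at hsum
        linear_combination (norm := abel) -hsum
      have hkn : N ^ k = N ^ (k - n) * N ^ n := by
        rw [← pow_add]
        congr 1
        omega
      rw [hkn, ← Matrix.mulVec_mulVec, hNn]
      rw [Matrix.neg_mulVec, Matrix.mulVec_neg, Matrix.mulVec_neg, neg_eq_zero]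
      have hsum_mulVec : ∀ (s : Finset ℕ) (f : ℕ → Matrix (Fin n) (Fin n) ℝ),
          (∑ i ∈ s, f i) *ᵥ w = ∑ i ∈ s, f i *ᵥ w := by
        intro s f
        classical
        induction s using Finset.induction_on with
        | empty => simp
        | insert _ _ hns ih => rw [Finset.sum_insert hns, Finset.sum_insert hns,
            Matrix.add_mulVec, ih]
      have hexp : (∑ i ∈ Finset.range n, N.charpoly.coeff i • N ^ i) *ᵥ w
          = ∑ i ∈ Finset.range n, N.charpoly.coeff i • (N ^ i *ᵥ w) := by
        rw [hsum_mulVec]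
        exact Finset.sum_congr rfl fun i _ => Matrix.smul_mulVec _ _ _
      rw [hexp]
      have hexp2 : N ^ (k - n) *ᵥ (∑ i ∈ Finset.range n, N.charpoly.coeff i • (N ^ i *ᵥ w))
          = ∑ i ∈ Finset.range n, N.charpoly.coeff i • (N ^ (k - n + i) *ᵥ w) := by
        rw [← Matrix.mulVecLin_apply, map_sum]
        congr 1
        ext i
        simp [Matrix.mulVecLin_apply, Matrix.mulVec_smul, Matrix.mulVec_mulVec, ← pow_add]
      rw [hexp2, ← Matrix.mulVecLin_apply, map_sum]
      refine Finset.sum_eq_zero fun i hi => ?_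
      rw [Finset.mem_range] at hi
      have : Q *ᵥ (N ^ (k - n + i) *ᵥ w) = 0 := ih _ (by omega)
      simp [Matrix.mulVecLin_apply, Matrix.mulVec_smul, this]


lemma aeval_comp_negX {A : Type*} [Ring A] [Algebra ℝ A] (T : A) (p : ℝ[X]) :
    aeval T (p.comp (-X)) = aeval (-T) p := by
  induction p using Polynomial.induction_on' with
  | add p q hp hq => rw [add_comp, map_add, map_add, hp, hq]
  | monomial k c =>
      rw [monomial_comp, aeval_monomial, _root_.map_mul, map_pow, map_neg, aeval_X, aeval_C]

lemma mulVec_lyap {A P Q : Matrix (Fin n) (Fin n) ℝ}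
    (heq : A * P + P * Aᵀ + Q = 0) (u : Fin n → ℝ) :
    A *ᵥ (P *ᵥ u) + P *ᵥ (Aᵀ *ᵥ u) + Q *ᵥ u = 0 := by
  have h0 := congrArg (fun (M : Matrix (Fin n) (Fin n) ℝ) => M *ᵥ u) heq
  simpa [Matrix.add_mulVec, Matrix.mulVec_mulVec] using h0

lemma lyap_ker {A P Q : Matrix (Fin n) (Fin n) ℝ} (hP : P.PosSemidef) (hQ : Q.PosSemidef)
    (heq : A * P + P * Aᵀ + Q = 0) {w : Fin n → ℝ} (hw : P *ᵥ w = 0) :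
    Q *ᵥ w = 0 ∧ P *ᵥ (Aᵀ *ᵥ w) = 0 := by
  have h0 := mulVec_lyap heq w
  rw [hw, Matrix.mulVec_zero, zero_add] at h0
  have h1 : w ⬝ᵥ (P *ᵥ (Aᵀ *ᵥ w)) = 0 := by
    rw [dotProduct_comm, dotmv, psd_symm hP, hw, dotProduct_zero]
  have h2 : w ⬝ᵥ (Q *ᵥ w) = 0 := by
    have h3 := congrArg (fun v => w ⬝ᵥ v) h0
    simp only [dotProduct_add, dotProduct_zero] at h3
    rw [h1, zero_add] at h3
    exact h3
  have hQw : Q *ᵥ w = 0 := psd_dot_zero hQ h2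
  refine ⟨hQw, ?_⟩
  rw [hQw, add_zero] at h0
  exact h0

lemma lyap_hard {A P Q : Matrix (Fin n) (Fin n) ℝ}
    (hA : ∀ μ ∈ spectrum ℂ (A.map (algebraMap ℝ ℂ)), μ.re < 0)
    (hP : P.PosSemidef) (heq : A * P + P * Aᵀ + Q = 0)
    {w : Fin n → ℝ} (hw : ∀ k : ℕ, Q *ᵥ (Aᵀ ^ k *ᵥ w) = 0) : P *ᵥ w = 0 := by
  have hg : ∀ i j : ℕ, (Aᵀ ^ i *ᵥ w) ⬝ᵥ (P *ᵥ (Aᵀ ^ j *ᵥ w))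
      = (-1 : ℝ) ^ i * (w ⬝ᵥ (P *ᵥ (Aᵀ ^ (i + j) *ᵥ w))) := by
    intro i
    induction i with
    | zero => intro j; simp
    | succ i ih =>
        intro j
        have e1 : Aᵀ ^ (i + 1) *ᵥ w = Aᵀ *ᵥ (Aᵀ ^ i *ᵥ w) := by
          rw [Matrix.mulVec_mulVec, ← pow_succ']
        have e2 : A *ᵥ (P *ᵥ (Aᵀ ^ j *ᵥ w))
            = -(P *ᵥ (Aᵀ ^ (j + 1) *ᵥ w)) := by
          have h0 := mulVec_lyap heq (Aᵀ ^ j *ᵥ w)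
          rw [hw j, add_zero] at h0
          have e3 : Aᵀ *ᵥ (Aᵀ ^ j *ᵥ w) = Aᵀ ^ (j + 1) *ᵥ w := by
            rw [Matrix.mulVec_mulVec, ← pow_succ']
          rw [e3] at h0
          exact eq_neg_of_add_eq_zero_left h0
        rw [e1, dotmv, transpose_transpose, e2, dotProduct_neg, ih (j + 1)]
        have e4 : i + (j + 1) = (i + 1) + j := by omega
        rw [e4, pow_succ]
        ring
  have hco : IsCoprime (Aᵀ.charpoly) ((Aᵀ.charpoly).comp (-X)) := by
    rw [charpoly_transpose]; exact hurwitz_coprime hA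
  have hqA : aeval Aᵀ (Aᵀ.charpoly) = 0 := Matrix.aeval_self_charpoly Aᵀ
  have hq : aeval shift (Aᵀ.charpoly) (fun k => w ⬝ᵥ (P *ᵥ (Aᵀ ^ k *ᵥ w))) = 0 := by
    funext j
    simp only [Pi.zero_apply]
    rw [aeval_shift_seq Aᵀ P w _ j, hqA, zero_mul, Matrix.zero_mulVec, Matrix.mulVec_zero,
      dotProduct_zero]
  have hr : aeval shift ((Aᵀ.charpoly).comp (-X)) (fun k => w ⬝ᵥ (P *ᵥ (Aᵀ ^ k *ᵥ w))) = 0 := by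
    rw [aeval_comp_negX]
    funext j
    simp only [Pi.zero_apply]
    rw [aeval_neg_shift_seq Aᵀ P w hg _ j, hqA, Matrix.zero_mulVec, zero_dotProduct]
  have hs0 := seq_zero hco hq hr
  have h00 := congrFun hs0 0
  simp only [pow_zero, Matrix.one_mulVec, Pi.zero_apply] at h00
  exact psd_dot_zero hP h00


lemma sum_mulVec'' {n m : ℕ} {ι : Type*} (s : Finset ι) (f : ι → Matrix (Fin n) (Fin m) ℝ)
    (w : Fin m → ℝ) : (∑ i ∈ s, f i) *ᵥ w = ∑ i ∈ s, f i *ᵥ w := by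
  classical
  induction s using Finset.induction_on with
  | empty => simp
  | insert _ _ hns ih => rw [Finset.sum_insert hns, Finset.sum_insert hns, Matrix.add_mulVec, ih]

lemma dot_sum {n : ℕ} {ι : Type*} (s : Finset ι) (v : Fin n → ℝ) (f : ι → Fin n → ℝ) :
    v ⬝ᵥ (∑ i ∈ s, f i) = ∑ i ∈ s, v ⬝ᵥ f i := by
  classical
  induction s using Finset.induction_on with
  | empty => simp
  | insert _ _ hns ih => rw [Finset.sum_insert hns, Finset.sum_insert hns, dotProduct_add, ih]

lemma psd_sum {n : ℕ} {ι : Type*} (s : Finset ι) (f : ι → Matrix (Fin n) (Fin n) ℝ)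
    (h : ∀ i ∈ s, (f i).PosSemidef) : (∑ i ∈ s, f i).PosSemidef :=
  Finset.sum_induction f _ (fun _ _ ha hb => ha.add hb) (Matrix.PosSemidef.zero) h


end RGEAux

open RGEAux Polynomial

theorem range_gramian_eq_span_products_of_D_and_A
    {n m M : ℕ} (hM : 0 < M)
    (A : Fin M → Matrix (Fin n) (Fin n) ℝ)
    (B : Fin M → Matrix (Fin n) (Fin m) ℝ)
    (hA : IsHurwitz (A ⟨0, hM⟩))
    (D : Fin M → Matrix (Fin n) (Fin n) ℝ)
    (hD : ∀ j, D j = A j - A ⟨0, hM⟩)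
    (P : ℕ → Matrix (Fin n) (Fin n) ℝ)
    -- `P 0` plays the role of `P₁`, etc.
    (hP1psd : (P 0).PosSemidef)
    (hP1 : A ⟨0, hM⟩ * P 0 + P 0 * (A ⟨0, hM⟩)ᵀ + ∑ j : Fin M, B j * (B j)ᵀ = 0)
    (hPkpsd : ∀ k : ℕ, (P (k + 1)).PosSemidef)
    (hPk : ∀ k : ℕ,
      A ⟨0, hM⟩ * P (k + 1) + P (k + 1) * (A ⟨0, hM⟩)ᵀ +
        ∑ j : Fin M, D j * P k * (D j)ᵀ = 0)
    (S : Matrix (Fin n) (Fin n) ℝ) (hS : HasSum P S) :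
    LinearMap.range S.mulVecLin =
      ⨆ (L : List (Matrix (Fin n) (Fin n) ℝ))
        (_ : ∀ X ∈ L, X ∈ insert (A ⟨0, hM⟩) (Set.range D)) (i : Fin M),
        LinearMap.range ((L.prod * B i).mulVecLin) := by
  set A₀ := A ⟨0, hM⟩ with hA₀
  set Q1 : Matrix (Fin n) (Fin n) ℝ := ∑ j : Fin M, B j * (B j)ᵀ with hQ1def
  set QD : ℕ → Matrix (Fin n) (Fin n) ℝ := fun k => ∑ j : Fin M, D j * P k * (D j)ᵀ with hQDdef
  set W := ⨆ (L : List (Matrix (Fin n) (Fin n) ℝ))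
        (_ : ∀ X ∈ L, X ∈ insert A₀ (Set.range D)) (i : Fin M),
        LinearMap.range ((L.prod * B i).mulVecLin) with hWdef
  have hPpsd : ∀ k, (P k).PosSemidef := by
    intro k; cases k with
    | zero => exact hP1psd
    | succ k => exact hPkpsd k
  have hQ1psd : Q1.PosSemidef := by
    refine psd_sum _ _ fun j _ => ?_
    have := Matrix.posSemidef_self_mul_conjTranspose (B j)
    rwa [Matrix.conjTranspose_eq_transpose_of_trivial] at this
  have hQDpsd : ∀ k, (QD k).PosSemidef := by
    intro k
    refine psd_sum _ _ fun j _ => ?_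
    have := (hPpsd k).mul_mul_conjTranspose_same (D j)
    rwa [Matrix.conjTranspose_eq_transpose_of_trivial] at this
  have heq : ∀ k, A₀ * P k + P k * A₀ᵀ + (match k with | 0 => Q1 | (k+1) => QD k) = 0 := by
    intro k; cases k with
    | zero => exact hP1
    | succ k => exact hPk k
  -- HasSum consequences
  have hSmul : ∀ v : Fin n → ℝ, HasSum (fun k => P k *ᵥ v) (S *ᵥ v) := by
    intro v
    let φ : Matrix (Fin n) (Fin n) ℝ →ₗ[ℝ] (Fin n → ℝ) :=
      { toFun := fun X => X *ᵥ v
        map_add' := fun X Y => Matrix.add_mulVec X Y v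
        map_smul' := fun c X => Matrix.smul_mulVec c X v }
    exact hS.map φ φ.continuous_of_finiteDimensional
  have hSdot : ∀ v w : Fin n → ℝ, HasSum (fun k => v ⬝ᵥ (P k *ᵥ w)) (v ⬝ᵥ (S *ᵥ w)) := by
    intro v w
    let φ : (Fin n → ℝ) →ₗ[ℝ] ℝ :=
      { toFun := fun x => v ⬝ᵥ x
        map_add' := fun x y => dotProduct_add v x y
        map_smul' := fun c x => dotProduct_smul c v x }
    exact (hSmul w).map φ φ.continuous_of_finiteDimensional
  have hSsymm : Sᵀ = S := by
    let φ : Matrix (Fin n) (Fin n) ℝ →ₗ[ℝ] Matrix (Fin n) (Fin n) ℝ :=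
      { toFun := fun X => Xᵀ
        map_add' := fun X Y => Matrix.transpose_add X Y
        map_smul' := fun c X => Matrix.transpose_smul c X }
    have h1 : HasSum (fun k => (P k)ᵀ) Sᵀ := hS.map φ φ.continuous_of_finiteDimensional
    have h2 : HasSum P Sᵀ := by
      refine h1.congr_fun fun k => (psd_symm (hPpsd k)).symm
    exact h2.unique hS
  have hSpsd : S.PosSemidef := by
    refine Matrix.PosSemidef.of_dotProduct_mulVec_nonneg ?_ ?_
    · exact (Matrix.conjTranspose_eq_transpose_of_trivial S).trans hSsymm
    · intro x
      have h0 : (0:ℝ) ≤ x ⬝ᵥ (S *ᵥ x) := by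
        refine hasSum_le (fun k => ?_) hasSum_zero (hSdot x x)
        have := (hPpsd k).dotProduct_mulVec_nonneg x
        simpa using this
      simpa using h0
  have hkerS : ∀ w, S *ᵥ w = 0 → ∀ k, P k *ᵥ w = 0 := by
    intro w hw k
    have h1 : HasSum (fun k => w ⬝ᵥ (P k *ᵥ w)) 0 := by
      have := hSdot w w
      rwa [hw, dotProduct_zero] at this
    have h2 : w ⬝ᵥ (P k *ᵥ w) ≤ 0 := le_hasSum h1 k fun j _ => by
      have := (hPpsd j).dotProduct_mulVec_nonneg w; simpa using this
    have h3 : (0:ℝ) ≤ w ⬝ᵥ (P k *ᵥ w) := by have := (hPpsd k).dotProduct_mulVec_nonneg w; simpa using this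
    exact psd_dot_zero (hPpsd k) (le_antisymm h2 h3)
  have hSker_eq : ∀ w, (∀ k, P k *ᵥ w = 0) → S *ᵥ w = 0 := by
    intro w hw
    have h1 : HasSum (fun k : ℕ => (0 : Fin n → ℝ)) (S *ᵥ w) := by
      refine (hSmul w).congr_fun fun k => (hw k).symm
    exact h1.unique hasSum_zero
  -- dot through symmetric S
  have hdotS : ∀ (u z : Fin n → ℝ), (S *ᵥ u) ⬝ᵥ z = u ⬝ᵥ (S *ᵥ z) := by
    intro u z; rw [dotmv, hSsymm]
  -- expansion of quadratic forms of QD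
  have hQDdot : ∀ k (w : Fin n → ℝ), QD k *ᵥ w = 0 →
      ∀ j, P k *ᵥ ((D j)ᵀ *ᵥ w) = 0 := by
    intro k w hw j
    have h0 : w ⬝ᵥ (QD k *ᵥ w) = 0 := by rw [hw, dotProduct_zero]
    have hexp : w ⬝ᵥ (QD k *ᵥ w)
        = ∑ j : Fin M, ((D j)ᵀ *ᵥ w) ⬝ᵥ (P k *ᵥ ((D j)ᵀ *ᵥ w)) := by
      rw [hQDdef]
      rw [sum_mulVec'', dot_sum]
      refine Finset.sum_congr rfl fun j _ => ?_
      rw [← Matrix.mulVec_mulVec, ← Matrix.mulVec_mulVec, dotProduct_comm, dotmv,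
        dotProduct_comm]
    rw [hexp] at h0
    have hterm : ((D j)ᵀ *ᵥ w) ⬝ᵥ (P k *ᵥ ((D j)ᵀ *ᵥ w)) = 0 := by
      have hnn : ∀ i ∈ Finset.univ (α := Fin M),
          (0:ℝ) ≤ ((D i)ᵀ *ᵥ w) ⬝ᵥ (P k *ᵥ ((D i)ᵀ *ᵥ w)) := by
        intro i _; have := (hPpsd k).dotProduct_mulVec_nonneg ((D i)ᵀ *ᵥ w); simpa using this
      exact (Finset.sum_eq_zero_iff_of_nonneg hnn).mp h0 j (Finset.mem_univ j)
    exact psd_dot_zero (hPpsd k) hterm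
  have hQ1dot : ∀ (w : Fin n → ℝ), Q1 *ᵥ w = 0 → ∀ i, (B i)ᵀ *ᵥ w = 0 := by
    intro w hw i
    have h0 : w ⬝ᵥ (Q1 *ᵥ w) = 0 := by rw [hw, dotProduct_zero]
    have hexp : w ⬝ᵥ (Q1 *ᵥ w) = ∑ j : Fin M, ((B j)ᵀ *ᵥ w) ⬝ᵥ ((B j)ᵀ *ᵥ w) := by
      rw [hQ1def, sum_mulVec'', dot_sum]
      refine Finset.sum_congr rfl fun j _ => ?_
      rw [← Matrix.mulVec_mulVec, dotProduct_comm, dotmv]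
    rw [hexp] at h0
    have hterm : ((B i)ᵀ *ᵥ w) ⬝ᵥ ((B i)ᵀ *ᵥ w) = 0 := by
      have hnn : ∀ i ∈ Finset.univ (α := Fin M),
          (0:ℝ) ≤ ((B i)ᵀ *ᵥ w) ⬝ᵥ ((B i)ᵀ *ᵥ w) := fun i _ => by
        have : (0:ℝ) ≤ ∑ t, ((B i)ᵀ *ᵥ w) t * ((B i)ᵀ *ᵥ w) t :=
          Finset.sum_nonneg fun t _ => mul_self_nonneg _
        simpa [dotProduct] using this
      exact (Finset.sum_eq_zero_iff_of_nonneg hnn).mp h0 i (Finset.mem_univ i)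
    exact dotProduct_self_eq_zero.mp hterm
  -- membership basics for W
  have hWB : ∀ (i : Fin M) (x : Fin m → ℝ), B i *ᵥ x ∈ W := by
    intro i x
    rw [hWdef]
    refine Submodule.mem_iSup_of_mem ([] : List (Matrix (Fin n) (Fin n) ℝ)) ?_
    refine Submodule.mem_iSup_of_mem (by simp) ?_
    refine Submodule.mem_iSup_of_mem i ?_
    exact ⟨x, by simp [Matrix.mulVecLin_apply]⟩
  have hWstab : ∀ C ∈ insert A₀ (Set.range D), ∀ x ∈ W, C *ᵥ x ∈ W := by
    intro C hC x hx
    have hmap : Submodule.map C.mulVecLin W ≤ W := by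
      rw [hWdef, Submodule.map_iSup]
      refine iSup_le fun L => ?_
      rw [Submodule.map_iSup]
      refine iSup_le fun hL => ?_
      rw [Submodule.map_iSup]
      refine iSup_le fun i => ?_
      have e : Submodule.map C.mulVecLin (LinearMap.range ((L.prod * B i).mulVecLin))
          = LinearMap.range (((C :: L).prod * B i).mulVecLin) := by
        rw [← LinearMap.range_comp, ← Matrix.mulVecLin_mul, List.prod_cons, Matrix.mul_assoc]
      rw [e]
      refine le_iSup_of_le (C :: L) (le_iSup_of_le ?_ (le_iSup_of_le i le_rfl))
      intro X hX
      rcases List.mem_cons.mp hX with h | h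
      · subst h; exact hC
      · exact hL X h
    exact hmap ⟨x, hx, rfl⟩
  have hWA0 : ∀ x ∈ W, A₀ *ᵥ x ∈ W := hWstab A₀ (Set.mem_insert _ _)
  have hWD : ∀ j, ∀ x ∈ W, D j *ᵥ x ∈ W := fun j =>
    hWstab (D j) (Set.mem_insert_iff.mpr (Or.inr ⟨j, rfl⟩))
  have hWA0pow : ∀ (t : ℕ), ∀ x ∈ W, A₀ ^ t *ᵥ x ∈ W := by
    intro t
    induction t with
    | zero => intro x hx; simpa using hx
    | succ t ih =>
        intro x hx
        have e : A₀ ^ (t + 1) *ᵥ x = A₀ *ᵥ (A₀ ^ t *ᵥ x) := by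
          rw [Matrix.mulVec_mulVec, ← pow_succ']
        rw [e]
        exact hWA0 _ (ih x hx)
  have key : ∀ (k : ℕ) (Q : Matrix (Fin n) (Fin n) ℝ), Q.PosSemidef →
      (A₀ * P k + P k * A₀ᵀ + Q = 0) → (∀ z, Q *ᵥ z ∈ W) →
      ∀ x, P k *ᵥ x ∈ W := by
    intro k Q hQpsd heqk hQW x
    set G : Matrix (Fin n) (Fin n) ℝ :=
      ∑ t ∈ Finset.range n, (A₀ ^ t * Q) * (A₀ ^ t * Q)ᵀ with hGdef
    have hGsym : Gᵀ = G := by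
      rw [hGdef, Matrix.transpose_sum]
      refine Finset.sum_congr rfl fun t _ => ?_
      rw [Matrix.transpose_mul, Matrix.transpose_transpose]
    have hmem : P k *ᵥ x ∈ LinearMap.range G.mulVecLin := by
      refine mem_range_of_dot_ker hGsym fun w hw => ?_
      have h0 : w ⬝ᵥ (G *ᵥ w) = 0 := by rw [hw, dotProduct_zero]
      have hexp : w ⬝ᵥ (G *ᵥ w)
          = ∑ t ∈ Finset.range n, ((A₀ ^ t * Q)ᵀ *ᵥ w) ⬝ᵥ ((A₀ ^ t * Q)ᵀ *ᵥ w) := by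
        rw [hGdef, sum_mulVec'', dot_sum]
        refine Finset.sum_congr rfl fun t _ => ?_
        rw [← Matrix.mulVec_mulVec, dotProduct_comm, dotmv]
      rw [hexp] at h0
      have hQw : ∀ t < n, Q *ᵥ (A₀ᵀ ^ t *ᵥ w) = 0 := by
        intro t ht
        have hnn : ∀ t ∈ Finset.range n,
            (0:ℝ) ≤ ((A₀ ^ t * Q)ᵀ *ᵥ w) ⬝ᵥ ((A₀ ^ t * Q)ᵀ *ᵥ w) := by
          intro t _
          have : (0:ℝ) ≤ ∑ i, ((A₀ ^ t * Q)ᵀ *ᵥ w) i * ((A₀ ^ t * Q)ᵀ *ᵥ w) i :=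
            Finset.sum_nonneg fun i _ => mul_self_nonneg _
          simpa [dotProduct] using this
        have hterm : ((A₀ ^ t * Q)ᵀ *ᵥ w) ⬝ᵥ ((A₀ ^ t * Q)ᵀ *ᵥ w) = 0 :=
          (Finset.sum_eq_zero_iff_of_nonneg hnn).mp h0 t (Finset.mem_range.mpr ht)
        have hz : (A₀ ^ t * Q)ᵀ *ᵥ w = 0 := dotProduct_self_eq_zero.mp hterm
        have e : (A₀ ^ t * Q)ᵀ *ᵥ w = Qᵀ *ᵥ ((A₀ᵀ) ^ t *ᵥ w) := by
          rw [Matrix.transpose_mul, ← Matrix.mulVec_mulVec, Matrix.transpose_pow]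
        rw [e, psd_symm hQpsd] at hz
        exact hz
      have hQall := pow_mulVec_zero A₀ᵀ Q w hQw
      have hPkw : P k *ᵥ w = 0 := lyap_hard hA (hPpsd k) heqk hQall
      rw [dotProduct_comm, dotmv, psd_symm (hPpsd k), hPkw, dotProduct_zero]
    obtain ⟨u, hu⟩ := hmem
    rw [Matrix.mulVecLin_apply] at hu
    rw [← hu]
    have hexpand : G *ᵥ u
        = ∑ t ∈ Finset.range n, A₀ ^ t *ᵥ (Q *ᵥ ((A₀ ^ t * Q)ᵀ *ᵥ u)) := by
      rw [hGdef, sum_mulVec'']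
      refine Finset.sum_congr rfl fun t _ => ?_
      rw [← Matrix.mulVec_mulVec, ← Matrix.mulVec_mulVec]
    rw [hexpand]
    exact Submodule.sum_mem _ fun t _ => hWA0pow t _ (hQW _)
  have hPW : ∀ k (x : Fin n → ℝ), P k *ᵥ x ∈ W := by
    intro k
    induction k with
    | zero =>
        refine key 0 Q1 hQ1psd (heq 0) fun z => ?_
        rw [hQ1def, sum_mulVec'']
        refine Submodule.sum_mem _ fun j _ => ?_
        rw [← Matrix.mulVec_mulVec]
        exact hWB j _
    | succ k ih =>
        refine key (k + 1) (QD k) (hQDpsd k) (heq (k + 1)) fun z => ?_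
        have e : QD k *ᵥ z = ∑ j : Fin M, D j *ᵥ (P k *ᵥ ((D j)ᵀ *ᵥ z)) := by
          simp only [hQDdef]
          rw [sum_mulVec'']
          refine Finset.sum_congr rfl fun j _ => ?_
          rw [← Matrix.mulVec_mulVec, ← Matrix.mulVec_mulVec]
        rw [e]
        exact Submodule.sum_mem _ fun j _ => hWD j _ (ih _)
  have hSW : ∀ v, S *ᵥ v ∈ W := by
    intro v
    have htend := (hSmul v).tendsto_sum_nat
    refine (Submodule.closed_of_finiteDimensional W).mem_of_tendsto htend ?_
    exact Filter.Eventually.of_forall fun N => Submodule.sum_mem _ fun k _ => hPW k v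
  have hrangeB : ∀ (i : Fin M) (y : Fin m → ℝ),
      B i *ᵥ y ∈ LinearMap.range S.mulVecLin := by
    intro i y
    refine mem_range_of_dot_ker (psd_symm hSpsd) fun w hw => ?_
    have h0 : (B i)ᵀ *ᵥ w = 0 :=
      hQ1dot w (lyap_ker (hPpsd 0) hQ1psd (heq 0) (hkerS w hw 0)).1 i
    rw [dotProduct_comm, dotmv, h0, dotProduct_zero]
  have hrangeStab : ∀ C ∈ insert A₀ (Set.range D), ∀ x ∈ LinearMap.range S.mulVecLin,
      C *ᵥ x ∈ LinearMap.range S.mulVecLin := by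
    rintro C hC x ⟨u, rfl⟩
    rw [Matrix.mulVecLin_apply]
    rcases Set.mem_insert_iff.mp hC with h | ⟨j, rfl⟩
    · subst h
      refine mem_range_of_dot_ker (psd_symm hSpsd) fun w hw => ?_
      have hPk0 : ∀ k, P k *ᵥ (A₀ᵀ *ᵥ w) = 0 := by
        intro k
        cases k with
        | zero => exact (lyap_ker (hPpsd 0) hQ1psd (heq 0) (hkerS w hw 0)).2
        | succ k =>
            exact (lyap_ker (hPpsd (k + 1)) (hQDpsd k) (heq (k + 1)) (hkerS w hw (k + 1))).2
      have hSz : S *ᵥ (A₀ᵀ *ᵥ w) = 0 := hSker_eq _ hPk0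
      rw [dotProduct_comm, dotmv, hdotS, hSz, dotProduct_zero]
    · refine mem_range_of_dot_ker (psd_symm hSpsd) fun w hw => ?_
      have hPk0 : ∀ k, P k *ᵥ ((D j)ᵀ *ᵥ w) = 0 := by
        intro k
        have hQDw : QD k *ᵥ w = 0 :=
          (lyap_ker (hPpsd (k + 1)) (hQDpsd k) (heq (k + 1)) (hkerS w hw (k + 1))).1
        exact hQDdot k w hQDw j
      have hSz : S *ᵥ ((D j)ᵀ *ᵥ w) = 0 := hSker_eq _ hPk0
      rw [dotProduct_comm, dotmv, hdotS, hSz, dotProduct_zero]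
  refine le_antisymm ?_ ?_
  · rintro x ⟨u, rfl⟩
    rw [Matrix.mulVecLin_apply]
    exact hSW u
  · refine iSup_le fun L => iSup_le fun hL => iSup_le fun i => ?_
    rintro x ⟨y, rfl⟩
    rw [Matrix.mulVecLin_apply, ← Matrix.mulVec_mulVec]
    have hind : ∀ (L' : List (Matrix (Fin n) (Fin n) ℝ)),
        (∀ X ∈ L', X ∈ insert A₀ (Set.range D)) →
        ∀ z ∈ LinearMap.range S.mulVecLin, L'.prod *ᵥ z ∈ LinearMap.range S.mulVecLin := by
      intro L'
      induction L' with
      | nil => intro _ z hz; simpa using hz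
      | cons C L' ih =>
          intro hL' z hz
          rw [List.prod_cons, ← Matrix.mulVec_mulVec]
          exact hrangeStab C (hL' C List.mem_cons_self) _
            (ih (fun X hX => hL' X (List.mem_cons_of_mem C hX)) z hz)
    exact hind L hL _ (hrangeB i y)
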